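/- For positive definite matrices A, B, the geometric mean equals the geometric mean of the arithmetic and harmonic means: A#B = ((A+B)/2) # (A!B). -/

import Mathlib

open Matrix
open scoped ComplexOrder

/-- Total matrix square root: the PSD square root on PSD matrices, `0` elsewhere. -/
noncomputable def msqrt {𝕜 : Type*} [RCLike 𝕜] {n : Type*} [Fintype n] [DecidableEq n]
    (A : Matrix n n 𝕜) : Matrix n n 𝕜 :=
  letI := Classical.dec A.PosSemidef
  if h : A.PosSemidef then
    (h.1.eigenvectorUnitary : Matrix n n 𝕜) * diagonal ((↑) ∘ (√·) ∘ h.1.eigenvalues) *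
      (star (h.1.eigenvectorUnitary : Matrix n n 𝕜)) else 0

/-- The matrix geometric mean `A # B = A^{1/2} (A^{-1/2} B A^{-1/2})^{1/2} A^{1/2}`. -/
noncomputable def geomMean {𝕜 : Type*} [RCLike 𝕜] {n : Type*} [Fintype n] [DecidableEq n]
    (A B : Matrix n n 𝕜) : Matrix n n 𝕜 :=
  msqrt A * msqrt ((msqrt A)⁻¹ * B * (msqrt A)⁻¹) * msqrt A

section SqrtPort

open scoped MatrixOrder

/-- The PSD square root (removed from Mathlib; re-provided for the port). -/
noncomputable def Matrix.PosSemidef.sqrt {𝕜 : Type*} [RCLike 𝕜] {n : Type*} [Fintype n]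
    [DecidableEq n] {A : Matrix n n 𝕜} (hA : A.PosSemidef) : Matrix n n 𝕜 :=
  (hA.1.eigenvectorUnitary : Matrix n n 𝕜) * diagonal ((↑) ∘ (√·) ∘ hA.1.eigenvalues) *
    (star (hA.1.eigenvectorUnitary : Matrix n n 𝕜))

lemma Matrix.PosSemidef.sqrt_eq_cfc {𝕜 : Type*} [RCLike 𝕜] {n : Type*} [Fintype n]
    [DecidableEq n] {A : Matrix n n 𝕜} (hA : A.PosSemidef) : hA.sqrt = CFC.sqrt A := by
  rw [CFC.sqrt_eq_cfc, cfc_nnreal_eq_real _ A hA.nonneg, hA.1.cfc_eq]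
  simp only [IsHermitian.cfc, Unitary.conjStarAlgAut_apply, Matrix.PosSemidef.sqrt]
  congr 3
  funext i
  simp [hA.eigenvalues_nonneg i]

lemma Matrix.PosSemidef.posSemidef_sqrt {𝕜 : Type*} [RCLike 𝕜] {n : Type*} [Fintype n]
    [DecidableEq n] {A : Matrix n n 𝕜} (hA : A.PosSemidef) : hA.sqrt.PosSemidef := by
  rw [hA.sqrt_eq_cfc]
  exact Matrix.nonneg_iff_posSemidef.mp (CFC.sqrt_nonneg A)

lemma Matrix.PosSemidef.sqrt_mul_self {𝕜 : Type*} [RCLike 𝕜] {n : Type*} [Fintype n]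
    [DecidableEq n] {A : Matrix n n 𝕜} (hA : A.PosSemidef) : hA.sqrt * hA.sqrt = A := by
  rw [hA.sqrt_eq_cfc]
  exact CFC.sqrt_mul_sqrt_self A hA.nonneg

lemma Matrix.PosSemidef.eq_sqrt_of_sq_eq {𝕜 : Type*} [RCLike 𝕜] {n : Type*} [Fintype n]
    [DecidableEq n] {A B : Matrix n n 𝕜} (hA : A.PosSemidef) (hB : B.PosSemidef)
    (hAB : A ^ 2 = B) : A = hB.sqrt := by
  rw [hB.sqrt_eq_cfc, eq_comm, CFC.sqrt_eq_iff B A hB.nonneg hA.nonneg, ← sq]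
  exact hAB

end SqrtPort

namespace GeomMeanAux

variable {n : ℕ}

lemma msqrt_eq {A : Matrix (Fin n) (Fin n) ℂ} (hA : A.PosSemidef) :
    msqrt A = hA.sqrt := by
  unfold msqrt
  exact dif_pos hA

lemma smul_posDef {c : ℂ} (hc : 0 < c) {M : Matrix (Fin n) (Fin n) ℂ} (hM : M.PosDef) :
    (c • M).PosDef := by
  have him : c.im = 0 := by
    have := (Complex.lt_def.mp hc).2
    simpa using this.symm
  refine posDef_iff_dotProduct_mulVec.mpr ⟨?_, fun x hx => ?_⟩
  · unfold Matrix.IsHermitian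
    rw [conjTranspose_smul, hM.1.eq]
    congr 1
    exact Complex.conj_eq_iff_im.mpr him
  · rw [smul_mulVec, dotProduct_smul, smul_eq_mul]
    exact mul_pos hc (hM.dotProduct_mulVec_pos hx)

lemma posDef_of_posSemidef_isUnit {M : Matrix (Fin n) (Fin n) ℂ}
    (hM : M.PosSemidef) (h : IsUnit M.det) : M.PosDef := by
  refine posDef_iff_dotProduct_mulVec.mpr ⟨hM.1, fun x hx => ?_⟩
  have hTT : hM.sqrt * hM.sqrt = M := hM.sqrt_mul_self
  have hTdet : IsUnit hM.sqrt.det := by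
    have hd : hM.sqrt.det * hM.sqrt.det = M.det := by rw [← det_mul, hTT]
    exact isUnit_of_mul_isUnit_left (hd ▸ h)
  have hTx : hM.sqrt *ᵥ x ≠ 0 := by
    intro hc
    exact hx <| (mulVec_injective_iff_isUnit.mpr ((isUnit_iff_isUnit_det _).mpr hTdet))
      (by simpa using hc)
  have key : star x ⬝ᵥ (hM.sqrt * hM.sqrt) *ᵥ x
      = star (hM.sqrt *ᵥ x) ⬝ᵥ (hM.sqrt *ᵥ x) := by
    rw [← mulVec_mulVec, dotProduct_mulVec, star_mulVec, hM.posSemidef_sqrt.1.eq]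
  rw [hTT] at key
  rw [key]
  exact dotProduct_star_self_pos_iff.mpr hTx

lemma conj_posDef {M C : Matrix (Fin n) (Fin n) ℂ} (hM : M.PosDef)
    (hC : IsUnit C.det) : (C * M * Cᴴ).PosDef := by
  refine posDef_iff_dotProduct_mulVec.mpr
    ⟨(hM.posSemidef.mul_mul_conjTranspose_same C).1, fun x hx => ?_⟩
  have hCdet : IsUnit Cᴴ.det := by
    rw [det_conjTranspose]
    exact hC.star
  have hCx : Cᴴ *ᵥ x ≠ 0 := by
    intro hc
    exact hx <| (mulVec_injective_iff_isUnit.mpr ((isUnit_iff_isUnit_det _).mpr hCdet))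
      (by simpa using hc)
  have := hM.dotProduct_mulVec_pos hCx
  simpa only [star_mulVec, dotProduct_mulVec, vecMul_vecMul,
    conjTranspose_conjTranspose] using this

lemma msqrt_posDef {A : Matrix (Fin n) (Fin n) ℂ} (hA : A.PosDef) :
    (msqrt A).PosDef := by
  rw [msqrt_eq hA.posSemidef]
  refine posDef_of_posSemidef_isUnit hA.posSemidef.posSemidef_sqrt ?_
  have hd : hA.posSemidef.sqrt.det * hA.posSemidef.sqrt.det = A.det := by
    rw [← det_mul, hA.posSemidef.sqrt_mul_self]
  exact isUnit_of_mul_isUnit_left (hd ▸ hA.det_pos.ne'.isUnit)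

lemma msqrt_mul_self {A : Matrix (Fin n) (Fin n) ℂ} (hA : A.PosDef) :
    msqrt A * msqrt A = A := by
  rw [msqrt_eq hA.posSemidef]
  exact hA.posSemidef.sqrt_mul_self

/-- Uniqueness: if `X` is positive definite and `X A⁻¹ X = B`, then `geomMean A B = X`. -/
lemma geomMean_eq_of {A B X : Matrix (Fin n) (Fin n) ℂ} (hA : A.PosDef)
    (hX : X.PosDef) (h : X * A⁻¹ * X = B) : geomMean A B = X := by
  set R := msqrt A with hRdef
  have hR : R.PosDef := msqrt_posDef hA
  have hRdet : IsUnit R.det := hR.det_pos.ne'.isUnit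
  have hRR : R * R = A := msqrt_mul_self hA
  have hRH : Rᴴ = R := hR.1.eq
  have hRiH : (R⁻¹)ᴴ = R⁻¹ := hR.1.inv.eq
  have hRidet : IsUnit (R⁻¹).det := by
    rw [det_nonsing_inv]
    exact hRdet.ringInverse
  have hAinv : A⁻¹ = R⁻¹ * R⁻¹ := by rw [← hRR, Matrix.mul_inv_rev]
  -- T := R⁻¹ X R⁻¹ is PD with T² = R⁻¹ B R⁻¹
  have hT : (R⁻¹ * X * R⁻¹).PosDef := by
    have := conj_posDef hX hRidet
    rwa [hRiH] at this
  have hTT : (R⁻¹ * X * R⁻¹) * (R⁻¹ * X * R⁻¹) = R⁻¹ * B * R⁻¹ := by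
    rw [← h, hAinv]
    noncomm_ring
  have hC : (R⁻¹ * B * R⁻¹).PosDef := by
    have hTdet : IsUnit (R⁻¹ * X * R⁻¹).det := hT.det_pos.ne'.isUnit
    have h1 := conj_posDef Matrix.PosDef.one hTdet
    rw [Matrix.mul_one, hT.1.eq, hTT] at h1
    exact h1
  have hsq : msqrt (R⁻¹ * B * R⁻¹) = R⁻¹ * X * R⁻¹ := by
    rw [msqrt_eq hC.posSemidef]
    exact (hT.posSemidef.eq_sqrt_of_sq_eq hC.posSemidef (by rw [sq, hTT])).symm
  show R * msqrt (R⁻¹ * B * R⁻¹) * R = X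
  rw [hsq]
  calc R * (R⁻¹ * X * R⁻¹) * R = (R * R⁻¹) * X * (R⁻¹ * R) := by noncomm_ring
    _ = X := by rw [Matrix.mul_nonsing_inv _ hRdet, Matrix.nonsing_inv_mul _ hRdet,
          Matrix.one_mul, Matrix.mul_one]

/-- Existence: `geomMean A B` is positive definite. -/
lemma geomMean_posDef {A B : Matrix (Fin n) (Fin n) ℂ} (hA : A.PosDef)
    (hB : B.PosDef) : (geomMean A B).PosDef := by
  set R := msqrt A with hRdef
  have hR : R.PosDef := msqrt_posDef hA
  have hRdet : IsUnit R.det := hR.det_pos.ne'.isUnit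
  have hRH : Rᴴ = R := hR.1.eq
  have hRiH : (R⁻¹)ᴴ = R⁻¹ := hR.1.inv.eq
  have hRidet : IsUnit (R⁻¹).det := by
    rw [det_nonsing_inv]; exact hRdet.ringInverse
  have hC : (R⁻¹ * B * R⁻¹).PosDef := by
    have := conj_posDef hB hRidet
    rwa [hRiH] at this
  have hS : (msqrt (R⁻¹ * B * R⁻¹)).PosDef := msqrt_posDef hC
  have := conj_posDef hS hRdet
  rwa [hRH] at this

/-- The defining property: `G A⁻¹ G = B` for `G = geomMean A B`. -/
lemma geomMean_conj {A B : Matrix (Fin n) (Fin n) ℂ} (hA : A.PosDef)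
    (hB : B.PosDef) : geomMean A B * A⁻¹ * geomMean A B = B := by
  set R := msqrt A with hRdef
  have hR : R.PosDef := msqrt_posDef hA
  have hRdet : IsUnit R.det := hR.det_pos.ne'.isUnit
  have hRR : R * R = A := msqrt_mul_self hA
  have hRiH : (R⁻¹)ᴴ = R⁻¹ := hR.1.inv.eq
  have hRidet : IsUnit (R⁻¹).det := by
    rw [det_nonsing_inv]; exact hRdet.ringInverse
  have hC : (R⁻¹ * B * R⁻¹).PosDef := by
    have := conj_posDef hB hRidet
    rwa [hRiH] at this
  have hSS : msqrt (R⁻¹ * B * R⁻¹) * msqrt (R⁻¹ * B * R⁻¹) = R⁻¹ * B * R⁻¹ :=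
    msqrt_mul_self hC
  have hAinv : A⁻¹ = R⁻¹ * R⁻¹ := by rw [← hRR, Matrix.mul_inv_rev]
  show (R * msqrt (R⁻¹ * B * R⁻¹) * R) * A⁻¹ * (R * msqrt (R⁻¹ * B * R⁻¹) * R) = B
  rw [hAinv]
  set S := msqrt (R⁻¹ * B * R⁻¹) with hSdef
  calc R * S * R * (R⁻¹ * R⁻¹) * (R * S * R)
      = R * S * (R * R⁻¹) * (R⁻¹ * R) * S * R := by noncomm_ring
    _ = R * (S * S) * R := by
        rw [Matrix.mul_nonsing_inv _ hRdet, Matrix.nonsing_inv_mul _ hRdet]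
        noncomm_ring
    _ = R * (R⁻¹ * B * R⁻¹) * R := by rw [hSS]
    _ = (R * R⁻¹) * B * (R⁻¹ * R) := by noncomm_ring
    _ = B := by rw [Matrix.mul_nonsing_inv _ hRdet, Matrix.nonsing_inv_mul _ hRdet,
          Matrix.one_mul, Matrix.mul_one]

end GeomMeanAux

/-- The geometric mean equals the geometric mean of the arithmetic and harmonic means:
`A # B = ((A+B)/2) # (A ! B)`. -/
theorem geomMean_eq_geomMean_arith_harm (n : ℕ) (A B : Matrix (Fin n) (Fin n) ℂ)
    (hA : A.PosDef) (hB : B.PosDef) :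
    geomMean A B = geomMean ((2 : ℂ)⁻¹ • (A + B)) ((2 : ℂ) • (A⁻¹ + B⁻¹)⁻¹) := by
  open GeomMeanAux in
  have h2 : (0 : ℂ) < 2 := by
    rw [Complex.lt_def]; norm_num
  have h2i : (0 : ℂ) < 2⁻¹ := by
    rw [Complex.lt_def]; norm_num [Complex.inv_re, Complex.inv_im, Complex.normSq]
  obtain ⟨G, hGeq, hG, hGAG⟩ : ∃ G, geomMean A B = G ∧ G.PosDef ∧ G * A⁻¹ * G = B :=
    ⟨geomMean A B, rfl, geomMean_posDef hA hB, geomMean_conj hA hB⟩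
  rw [hGeq]
  clear hGeq
  have hGdet : IsUnit G.det := hG.det_pos.ne'.isUnit
  have hAdet : IsUnit A.det := hA.det_pos.ne'.isUnit
  have hBdet : IsUnit B.det := hB.det_pos.ne'.isUnit
  have hM : ((2 : ℂ)⁻¹ • (A + B)).PosDef := smul_posDef h2i (hA.add hB)
  have hsumI : (A⁻¹ + B⁻¹).PosDef := hA.inv.add hB.inv
  have hsumIdet : IsUnit (A⁻¹ + B⁻¹).det := hsumI.det_pos.ne'.isUnit
  have hH : ((2 : ℂ) • (A⁻¹ + B⁻¹)⁻¹).PosDef := smul_posDef h2 hsumI.inv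
  have hABdet : IsUnit (A + B).det := (hA.add hB).det_pos.ne'.isUnit
  -- B⁻¹ = G⁻¹ A G⁻¹, hence G B⁻¹ G = A
  have hBinv : B⁻¹ = G⁻¹ * A * G⁻¹ := by
    rw [← hGAG, Matrix.mul_inv_rev, Matrix.mul_inv_rev,
      Matrix.nonsing_inv_nonsing_inv _ hAdet, Matrix.mul_assoc]
  have hGBG : G * B⁻¹ * G = A := by
    rw [hBinv]
    calc G * (G⁻¹ * A * G⁻¹) * G = (G * G⁻¹) * A * (G⁻¹ * G) := by noncomm_ring
      _ = A := by rw [Matrix.mul_nonsing_inv _ hGdet, Matrix.nonsing_inv_mul _ hGdet,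
            Matrix.one_mul, Matrix.mul_one]
  -- A + B = G (A⁻¹ + B⁻¹) G
  have hsum : A + B = G * (A⁻¹ + B⁻¹) * G := by
    rw [Matrix.mul_add, Matrix.add_mul, hGAG, hGBG, add_comm]
  -- G (A+B)⁻¹ G = (A⁻¹+B⁻¹)⁻¹
  have hkey : G * (A + B)⁻¹ * G = (A⁻¹ + B⁻¹)⁻¹ := by
    rw [hsum, Matrix.mul_inv_rev, Matrix.mul_inv_rev]
    calc G * (G⁻¹ * ((A⁻¹ + B⁻¹)⁻¹ * G⁻¹)) * G
        = (G * G⁻¹) * (A⁻¹ + B⁻¹)⁻¹ * (G⁻¹ * G) := by noncomm_ring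
      _ = (A⁻¹ + B⁻¹)⁻¹ := by rw [Matrix.mul_nonsing_inv _ hGdet,
            Matrix.nonsing_inv_mul _ hGdet, Matrix.one_mul, Matrix.mul_one]
  -- M⁻¹ = 2 • (A+B)⁻¹
  have hMinv : ((2 : ℂ)⁻¹ • (A + B))⁻¹ = (2 : ℂ) • (A + B)⁻¹ := by
    refine Matrix.inv_eq_left_inv ?_
    rw [Matrix.smul_mul, Matrix.mul_smul, smul_smul]
    norm_num
    exact Matrix.nonsing_inv_mul _ hABdet
  have hGMG : G * ((2 : ℂ)⁻¹ • (A + B))⁻¹ * G = (2 : ℂ) • (A⁻¹ + B⁻¹)⁻¹ := by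
    rw [hMinv, Matrix.mul_smul, Matrix.smul_mul, hkey]
  exact (geomMean_eq_of hM hG hGMG).symm
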